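/- Let φ be a positive linear map on D×D matrices with ker φ ∩ P_D = {0} and ker φ* ∩ P_D = {0}, and define the projective action φ·X = φ(X)/tr(φ(X)) on 𝕊_D and the contraction coefficient c(φ) = sup{d(φ·X, φ·Y) : X, Y ∈ 𝕊_D}. Then for all X, Y ∈ 𝕊_D, d(φ·X, φ·Y) ≤ c(φ)·d(X,Y). -/

import Mathlib

open Matrix
open scoped ComplexOrder

/-- `m(X,Y) = sup {λ : X - λY ⪰ 0}`. -/
noncomputable def mfun {D : ℕ} (X Y : Matrix (Fin D) (Fin D) ℂ) : ℝ :=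
  sSup {l : ℝ | (X - l • Y).PosSemidef}

/-- The projective metric `d(X,Y) = (1 - m(X,Y)m(Y,X))/(1 + m(X,Y)m(Y,X))`. -/
noncomputable def dfun {D : ℕ} (X Y : Matrix (Fin D) (Fin D) ℂ) : ℝ :=
  (1 - mfun X Y * mfun Y X) / (1 + mfun X Y * mfun Y X)

/-- The projective action `φ·X = φ(X)/tr(φ(X))`. -/
noncomputable def projAct {D : ℕ}
    (φ : Matrix (Fin D) (Fin D) ℂ →ₗ[ℂ] Matrix (Fin D) (Fin D) ℂ)
    (X : Matrix (Fin D) (Fin D) ℂ) : Matrix (Fin D) (Fin D) ℂ :=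
  ((φ X).trace)⁻¹ • φ X

/-- The contraction coefficient `c(φ) = sup {d(φ·X, φ·Y) : X, Y ∈ 𝕊_D}`. -/
noncomputable def contr {D : ℕ}
    (φ : Matrix (Fin D) (Fin D) ℂ →ₗ[ℂ] Matrix (Fin D) (Fin D) ℂ) : ℝ :=
  sSup {r : ℝ | ∃ X Y : Matrix (Fin D) (Fin D) ℂ, X.PosSemidef ∧ X.trace = 1 ∧
    Y.PosSemidef ∧ Y.trace = 1 ∧ r = dfun (projAct φ X) (projAct φ Y)}


variable {D : ℕ}



theorem psd_trace_nonneg (A : Matrix (Fin D) (Fin D) ℂ) (hA : A.PosSemidef) : 0 ≤ A.trace := by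
  rw [Matrix.trace]
  apply Finset.sum_nonneg
  intro i _
  have := hA.dotProduct_mulVec_nonneg (Pi.single i 1)
  simpa [Matrix.diag, mulVec, dotProduct, Pi.single_apply] using this

theorem qform_eq (X Y : Matrix (Fin D) (Fin D) ℂ) (l : ℝ) (x : Fin D → ℂ) :
    star x ⬝ᵥ (X - l • Y) *ᵥ x = star x ⬝ᵥ X *ᵥ x - (l:ℂ) * (star x ⬝ᵥ Y *ᵥ x) := by
  simp [sub_mulVec, smul_mulVec, dotProduct_sub, dotProduct_smul, Complex.real_smul]

theorem herm_sub_smul {X Y : Matrix (Fin D) (Fin D) ℂ} (hX : X.IsHermitian)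
    (hY : Y.IsHermitian) (l : ℝ) : (X - l • Y).IsHermitian := by
  unfold Matrix.IsHermitian at *
  rw [conjTranspose_sub]
  rw [show ((l • Y)ᴴ = l • Yᴴ) from by ext i j; simp [conjTranspose_apply]]
  rw [hX, hY]

theorem psd_smul_real {Y : Matrix (Fin D) (Fin D) ℂ} (hY : Y.PosSemidef) {c : ℝ}
    (hc : 0 ≤ c) : (c • Y).PosSemidef := by
  refine posSemidef_iff_dotProduct_mulVec.mpr ⟨?_, ?_⟩
  · unfold Matrix.IsHermitian at *
    rw [show ((c • Y)ᴴ = c • Yᴴ) from by ext i j; simp [conjTranspose_apply], hY.1]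
  · intro x
    have := hY.dotProduct_mulVec_nonneg x
    rw [smul_mulVec, dotProduct_smul]
    have : (0:ℂ) ≤ (c:ℂ) * (star x ⬝ᵥ Y *ᵥ x) := mul_nonneg (by exact_mod_cast hc) (hY.dotProduct_mulVec_nonneg x)
    simpa [Complex.real_smul] using this


theorem psd_trace_zero (A : Matrix (Fin D) (Fin D) ℂ) (hA : A.PosSemidef)
    (h : A.trace = 0) : A = 0 := by
  exact hA.trace_eq_zero_iff.mp h

-- S is nonempty
theorem S_zero_mem {X Y : Matrix (Fin D) (Fin D) ℂ} (hX : X.PosSemidef) :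
    (0:ℝ) ∈ {l : ℝ | (X - l • Y).PosSemidef} := by simpa using hX

theorem S_bddAbove {X Y : Matrix (Fin D) (Fin D) ℂ} (hX : X.PosSemidef)
    (hY : Y.PosSemidef) (hY0 : Y ≠ 0) :
    BddAbove {l : ℝ | (X - l • Y).PosSemidef} := by
  have htY : 0 < Y.trace.re := by
    have h1 := psd_trace_nonneg Y hY
    rcases lt_or_eq_of_le ((Complex.le_def.mp h1).1) with h | h
    · simpa using h
    · exfalso
      apply hY0
      apply psd_trace_zero Y hY
      have him : Y.trace.im = 0 := ((Complex.le_def.mp h1).2).symm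
      exact Complex.ext h.symm him
  refine ⟨X.trace.re / Y.trace.re, fun l hl => ?_⟩
  have h2 : 0 ≤ (X - l • Y).trace := psd_trace_nonneg _ hl
  have h3 : (X - l • Y).trace = X.trace - (l:ℂ) * Y.trace := by
    rw [trace_sub, trace_smul]; simp [Complex.real_smul]
  rw [h3] at h2
  have h4 := (Complex.le_def.mp h2).1
  simp only [Complex.sub_re, Complex.zero_re, Complex.mul_re, Complex.ofReal_re,
    Complex.ofReal_im] at h4
  rw [le_div_iff₀ htY]
  nlinarith [h4]

theorem qform_real {A : Matrix (Fin D) (Fin D) ℂ} (hA : A.PosSemidef) (x : Fin D → ℂ) :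
    star x ⬝ᵥ A *ᵥ x = (((star x ⬝ᵥ A *ᵥ x).re : ℝ) : ℂ) := by
  have h := Complex.le_def.mp (hA.dotProduct_mulVec_nonneg x)
  exact Complex.ext rfl (by simpa using h.2.symm)

theorem mfun_le {X Y : Matrix (Fin D) (Fin D) ℂ} (hX : X.PosSemidef)
    (hY : Y.PosSemidef) (hY0 : Y ≠ 0) {l : ℝ} (hl : (X - l • Y).PosSemidef) :
    l ≤ mfun X Y :=
  le_csSup (S_bddAbove hX hY hY0) hl

theorem mfun_nonneg {X Y : Matrix (Fin D) (Fin D) ℂ} (hX : X.PosSemidef)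
    (hY : Y.PosSemidef) (hY0 : Y ≠ 0) : 0 ≤ mfun X Y :=
  mfun_le hX hY hY0 (by simpa using hX)

theorem mfun_psd {X Y : Matrix (Fin D) (Fin D) ℂ} (hX : X.PosSemidef)
    (hY : Y.PosSemidef) (hY0 : Y ≠ 0) : (X - mfun X Y • Y).PosSemidef := by
  refine posSemidef_iff_dotProduct_mulVec.mpr ⟨?_, ?_⟩
  · exact herm_sub_smul hX.1 hY.1 _
  · intro x
    rw [qform_eq]
    set a : ℝ := (star x ⬝ᵥ X *ᵥ x).re with ha
    set b : ℝ := (star x ⬝ᵥ Y *ᵥ x).re with hb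
    have hXx : star x ⬝ᵥ X *ᵥ x = (a:ℂ) := qform_real hX x
    have hYx : star x ⬝ᵥ Y *ᵥ x = (b:ℂ) := qform_real hY x
    have ha0 : 0 ≤ a := (Complex.le_def.mp (hX.dotProduct_mulVec_nonneg x)).1
    have hb0 : 0 ≤ b := (Complex.le_def.mp (hY.dotProduct_mulVec_nonneg x)).1
    rw [hXx, hYx]
    have key : mfun X Y * b ≤ a := by
      rcases eq_or_lt_of_le hb0 with h | h
      · rw [← h]; simpa using ha0
      · have : ∀ l ∈ {l : ℝ | (X - l • Y).PosSemidef}, l ≤ a / b := by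
          intro l hl
          have h2 := hl.dotProduct_mulVec_nonneg x
          rw [qform_eq, hXx, hYx] at h2
          have h3 := (Complex.le_def.mp h2).1
          simp only [Complex.sub_re, Complex.zero_re, Complex.mul_re, Complex.ofReal_re,
            Complex.ofReal_im] at h3
          rw [le_div_iff₀ h]
          nlinarith
        have := csSup_le ⟨0, S_zero_mem hX⟩ this
        rw [← le_div_iff₀ h]
        exact this
    rw [Complex.le_def]
    constructor
    · simp only [Complex.sub_re, Complex.zero_re, Complex.mul_re, Complex.ofReal_re,
        Complex.ofReal_im]
      nlinarith
    · simp

theorem sSup_preimage_mul (S : Set ℝ) (k : ℝ) (hk : 0 < k) :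
    sSup {l : ℝ | l * k ∈ S} = sSup S / k := by
  rcases Set.eq_empty_or_nonempty S with h | h
  · have : {l : ℝ | l * k ∈ S} = ∅ := by
      ext l; simp [h]
    rw [this, h, Real.sSup_empty, zero_div]
  · by_cases hb : BddAbove S
    · have hT : IsLUB {l : ℝ | l * k ∈ S} (sSup S / k) := by
        constructor
        · intro l hl
          rw [le_div_iff₀ hk]
          exact le_csSup hb hl
        · intro u hu
          rw [div_le_iff₀ hk]
          apply csSup_le h
          intro s hs
          have : s / k ∈ {l : ℝ | l * k ∈ S} := by
            simp only [Set.mem_setOf_eq, div_mul_cancel₀ _ (ne_of_gt hk)]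
            exact hs
          have := hu this
          rw [div_le_iff₀ hk] at this
          exact this
      apply hT.csSup_eq
      obtain ⟨s, hs⟩ := h
      refine ⟨s / k, ?_⟩
      simp only [Set.mem_setOf_eq, div_mul_cancel₀ _ (ne_of_gt hk)]
      exact hs
    · have hb' : ¬ BddAbove {l : ℝ | l * k ∈ S} := by
        intro ⟨u, hu⟩
        apply hb
        refine ⟨u * k, fun s hs => ?_⟩
        have : s / k ∈ {l : ℝ | l * k ∈ S} := by
          simp only [Set.mem_setOf_eq, div_mul_cancel₀ _ (ne_of_gt hk)]
          exact hs
        have := hu this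
        rw [div_le_iff₀ hk] at this
        exact this
      rw [Real.sSup_of_not_bddAbove hb, Real.sSup_of_not_bddAbove hb', zero_div]

theorem psd_smul_real_iff {Y : Matrix (Fin D) (Fin D) ℂ} {c : ℝ} (hc : 0 < c) :
    (c • Y).PosSemidef ↔ Y.PosSemidef := by
  constructor
  · intro h
    have := psd_smul_real h (le_of_lt (inv_pos.mpr hc))
    rwa [smul_smul, inv_mul_cancel₀ (ne_of_gt hc), one_smul] at this
  · intro h; exact psd_smul_real h (le_of_lt hc)

theorem mfun_smul (X Y : Matrix (Fin D) (Fin D) ℂ) {s t : ℝ} (hs : 0 < s) (ht : 0 < t) :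
    mfun ((s:ℂ) • X) ((t:ℂ) • Y) = mfun X Y / (t / s) := by
  unfold mfun
  rw [← sSup_preimage_mul _ (t/s) (div_pos ht hs)]
  congr 1
  ext l
  simp only [Set.mem_setOf_eq]
  have e1 : (s:ℂ) • X = s • X := rfl
  have e2 : (t:ℂ) • Y = t • Y := rfl
  rw [e1, e2]
  have e3 : s • X - l • t • Y = s • (X - (l * (t/s)) • Y) := by
    rw [smul_sub, smul_smul, smul_smul]
    congr 2
    field_simp
  rw [e3, psd_smul_real_iff hs]



theorem dfun_smul (X Y : Matrix (Fin D) (Fin D) ℂ) {s t : ℝ} (hs : 0 < s) (ht : 0 < t) :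
    dfun ((s:ℂ) • X) ((t:ℂ) • Y) = dfun X Y := by
  unfold dfun
  rw [mfun_smul X Y hs ht, mfun_smul Y X ht hs]
  have h1 : t / s ≠ 0 := ne_of_gt (div_pos ht hs)
  have h2 : s / t ≠ 0 := ne_of_gt (div_pos hs ht)
  rw [div_mul_div_comm]
  congr 2 <;> · rw [div_eq_iff (by positivity)]; field_simp

theorem psd_trace_pos {A : Matrix (Fin D) (Fin D) ℂ} (hA : A.PosSemidef) (h0 : A ≠ 0) :
    0 < A.trace.re ∧ A.trace = ((A.trace.re : ℝ) : ℂ) := by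
  have h1 := psd_trace_nonneg A hA
  have him : A.trace.im = 0 := ((Complex.le_def.mp h1).2).symm
  have hre : 0 ≤ A.trace.re := (Complex.le_def.mp h1).1
  rcases lt_or_eq_of_le hre with h | h
  · exact ⟨h, Complex.ext rfl (by simpa using him)⟩
  · exfalso; exact h0 (psd_trace_zero A hA (Complex.ext h.symm him))





variable {φ : Matrix (Fin D) (Fin D) ℂ →ₗ[ℂ] Matrix (Fin D) (Fin D) ℂ}

section Phi
variable (hpos : ∀ M : Matrix (Fin D) (Fin D) ℂ, M.PosSemidef → (φ M).PosSemidef)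
  (hker : ∀ M : Matrix (Fin D) (Fin D) ℂ, M.PosSemidef → φ M = 0 → M = 0)

include hpos hker

theorem projAct_eq {X : Matrix (Fin D) (Fin D) ℂ} (hX : X.PosSemidef) (h0 : X ≠ 0) :
    projAct φ X = ((((φ X).trace.re)⁻¹ : ℝ) : ℂ) • φ X ∧ 0 < (φ X).trace.re := by
  have hfx : φ X ≠ 0 := fun h => h0 (hker X hX h)
  obtain ⟨hpos', heq⟩ := psd_trace_pos (hpos X hX) hfx
  refine ⟨?_, hpos'⟩
  rw [projAct, heq]
  norm_cast

theorem projAct_psd {X : Matrix (Fin D) (Fin D) ℂ} (hX : X.PosSemidef) (h0 : X ≠ 0) :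
    (projAct φ X).PosSemidef ∧ projAct φ X ≠ 0 := by
  obtain ⟨heq, hpos'⟩ := projAct_eq hpos hker hX h0
  have hfx : φ X ≠ 0 := fun h => h0 (hker X hX h)
  constructor
  · rw [heq]
    exact psd_smul_real (hpos X hX) (le_of_lt (inv_pos.mpr hpos'))
  · rw [heq]
    simp only [ne_eq, smul_eq_zero, not_or]
    refine ⟨?_, hfx⟩
    simp [ne_of_gt hpos']

theorem dfun_projAct {X Y : Matrix (Fin D) (Fin D) ℂ} (hX : X.PosSemidef) (hX0 : X ≠ 0)
    (hY : Y.PosSemidef) (hY0 : Y ≠ 0) :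
    dfun (projAct φ X) (projAct φ Y) = dfun (φ X) (φ Y) := by
  obtain ⟨heqX, hpX⟩ := projAct_eq hpos hker hX hX0
  obtain ⟨heqY, hpY⟩ := projAct_eq hpos hker hY hY0
  rw [heqX, heqY, dfun_smul _ _ (inv_pos.mpr hpX) (inv_pos.mpr hpY)]

theorem projAct_smul {X : Matrix (Fin D) (Fin D) ℂ} {c : ℝ} (hc : 0 < c) :
    projAct φ ((c:ℂ) • X) = projAct φ X := by
  rw [projAct, projAct, _root_.map_smul, trace_smul, smul_eq_mul, mul_inv, smul_smul]
  congr 1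
  have hc' : (c:ℂ) ≠ 0 := by exact_mod_cast ne_of_gt hc
  field_simp

end Phi

theorem frac_antitone {a b : ℝ} (ha : 0 ≤ a) (hab : a ≤ b) :
    (1 - b) / (1 + b) ≤ (1 - a) / (1 + a) := by
  rw [div_le_div_iff₀ (by linarith) (by linarith)]
  nlinarith

theorem mfun_le_one {X Y : Matrix (Fin D) (Fin D) ℂ} (hX : X.PosSemidef) (htX : X.trace = 1)
    (hY : Y.PosSemidef) (htY : Y.trace = 1) : mfun X Y ≤ 1 := by
  have hY0 : Y ≠ 0 := fun h => by simp [h] at htY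
  have hu := mfun_psd hX hY hY0
  have htr := psd_trace_nonneg _ hu
  have : (X - mfun X Y • Y).trace = ((1 - mfun X Y : ℝ) : ℂ) := by
    rw [trace_sub, trace_smul, htX, htY]
    push_cast
    simp [Complex.real_smul]
  rw [this] at htr
  have := (Complex.le_def.mp htr).1
  simp at this
  linarith

theorem mfun_lt_one {X Y : Matrix (Fin D) (Fin D) ℂ} (hX : X.PosSemidef) (htX : X.trace = 1)
    (hY : Y.PosSemidef) (htY : Y.trace = 1) (hne : X ≠ Y) : mfun X Y < 1 := by
  rcases lt_or_eq_of_le (mfun_le_one hX htX hY htY) with h | h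
  · exact h
  · exfalso
    have hY0 : Y ≠ 0 := fun h' => by simp [h'] at htY
    have hu := mfun_psd hX hY hY0
    rw [h, one_smul] at hu
    have htr : (X - Y).trace = 0 := by rw [trace_sub, htX, htY, sub_self]
    have := psd_trace_zero _ hu htr
    exact hne (by rwa [sub_eq_zero] at this)

theorem mfun_self {Z : Matrix (Fin D) (Fin D) ℂ} (hZ : Z.PosSemidef) (h0 : Z ≠ 0) :
    mfun Z Z = 1 := by
  have h1 : (1:ℝ) ≤ mfun Z Z := mfun_le hZ hZ h0 (by simp [Matrix.PosSemidef.zero])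
  have h2 : mfun Z Z ≤ 1 := by
    apply csSup_le ⟨0, S_zero_mem hZ⟩
    intro l hl
    have htr := psd_trace_nonneg _ hl
    obtain ⟨hp, heq⟩ := psd_trace_pos hZ h0
    have : (Z - l • Z).trace = (((1 - l) * Z.trace.re : ℝ) : ℂ) := by
      rw [trace_sub, trace_smul, heq]
      push_cast
      simp [Complex.real_smul]
      ring
    rw [this] at htr
    have := (Complex.le_def.mp htr).1
    simp at this
    nlinarith
  linarith

theorem dfun_self {Z : Matrix (Fin D) (Fin D) ℂ} (hZ : Z.PosSemidef) (h0 : Z ≠ 0) :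
    dfun Z Z = 0 := by
  rw [dfun, mfun_self hZ h0]
  norm_num

theorem dfun_le_one {A B : Matrix (Fin D) (Fin D) ℂ} (hA : A.PosSemidef) (hA0 : A ≠ 0)
    (hB : B.PosSemidef) (hB0 : B ≠ 0) : dfun A B ≤ 1 := by
  have h1 : 0 ≤ mfun A B := mfun_nonneg hA hB hB0
  have h2 : 0 ≤ mfun B A := mfun_nonneg hB hA hA0
  rw [dfun, div_le_one (by nlinarith)]
  nlinarith

section Phi2
variable (hpos : ∀ M : Matrix (Fin D) (Fin D) ℂ, M.PosSemidef → (φ M).PosSemidef)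
  (hker : ∀ M : Matrix (Fin D) (Fin D) ℂ, M.PosSemidef → φ M = 0 → M = 0)

include hpos hker

theorem contr_bddAbove :
    BddAbove {r : ℝ | ∃ X Y : Matrix (Fin D) (Fin D) ℂ, X.PosSemidef ∧ X.trace = 1 ∧
      Y.PosSemidef ∧ Y.trace = 1 ∧ r = dfun (projAct φ X) (projAct φ Y)} := by
  refine ⟨1, fun r hr => ?_⟩
  obtain ⟨X, Y, hX, htX, hY, htY, rfl⟩ := hr
  have hX0 : X ≠ 0 := fun h => by simp [h] at htX
  have hY0 : Y ≠ 0 := fun h => by simp [h] at htY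
  obtain ⟨hpA, hA0⟩ := projAct_psd hpos hker hX hX0
  obtain ⟨hpB, hB0⟩ := projAct_psd hpos hker hY hY0
  exact dfun_le_one hpA hA0 hpB hB0

theorem dfun_le_contr {u v : Matrix (Fin D) (Fin D) ℂ} (hu : u.PosSemidef) (hu0 : u ≠ 0)
    (hv : v.PosSemidef) (hv0 : v ≠ 0) : dfun (φ u) (φ v) ≤ contr φ := by
  obtain ⟨hcu, hequ⟩ := psd_trace_pos hu hu0
  obtain ⟨hcv, heqv⟩ := psd_trace_pos hv hv0
  set X : Matrix (Fin D) (Fin D) ℂ := (((u.trace.re)⁻¹ : ℝ) : ℂ) • u with hXdef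
  set Y : Matrix (Fin D) (Fin D) ℂ := (((v.trace.re)⁻¹ : ℝ) : ℂ) • v with hYdef
  have hXpsd : X.PosSemidef := psd_smul_real hu (le_of_lt (inv_pos.mpr hcu))
  have hYpsd : Y.PosSemidef := psd_smul_real hv (le_of_lt (inv_pos.mpr hcv))
  have hXtr : X.trace = 1 := by
    rw [hXdef, trace_smul, hequ, smul_eq_mul]
    simp only [Complex.ofReal_re]
    push_cast
    exact inv_mul_cancel₀ (by exact_mod_cast (ne_of_gt hcu))
  have hYtr : Y.trace = 1 := by
    rw [hYdef, trace_smul, heqv, smul_eq_mul]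
    simp only [Complex.ofReal_re]
    push_cast
    exact inv_mul_cancel₀ (by exact_mod_cast (ne_of_gt hcv))
  have hmem : dfun (projAct φ X) (projAct φ Y) ∈ {r : ℝ | ∃ X Y : Matrix (Fin D) (Fin D) ℂ,
      X.PosSemidef ∧ X.trace = 1 ∧ Y.PosSemidef ∧ Y.trace = 1 ∧
      r = dfun (projAct φ X) (projAct φ Y)} := ⟨X, Y, hXpsd, hXtr, hYpsd, hYtr, rfl⟩
  have h1 := le_csSup (contr_bddAbove hpos hker) hmem
  rw [hXdef, hYdef, projAct_smul hpos hker (inv_pos.mpr hcu),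
    projAct_smul hpos hker (inv_pos.mpr hcv),
    dfun_projAct hpos hker hu hu0 hv hv0] at h1
  exact h1

theorem contr_nonneg {X : Matrix (Fin D) (Fin D) ℂ} (hX : X.PosSemidef) (htX : X.trace = 1) :
    0 ≤ contr φ := by
  have hX0 : X ≠ 0 := fun h => by simp [h] at htX
  obtain ⟨hpA, hA0⟩ := projAct_psd hpos hker hX hX0
  have hmem : (0:ℝ) ∈ {r : ℝ | ∃ X Y : Matrix (Fin D) (Fin D) ℂ,
      X.PosSemidef ∧ X.trace = 1 ∧ Y.PosSemidef ∧ Y.trace = 1 ∧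
      r = dfun (projAct φ X) (projAct φ Y)} :=
    ⟨X, X, hX, htX, hX, htX, (dfun_self hpA hA0).symm⟩
  exact le_csSup (contr_bddAbove hpos hker) hmem

end Phi2


theorem scalar1 (m M μ : ℝ) (hμ1 : 0 < 1 + μ) (a b : ℂ) :
    a - ((m + (M - m) * (μ / (1 + μ)) : ℝ) : ℂ) * b
      = ((1 / (1 + μ) : ℝ) : ℂ) * ((a - (m:ℝ) * b) - (μ:ℝ) * ((M:ℝ) * b - a)) := by
  push_cast
  have h1 : ((1:ℂ) + (μ:ℂ)) ≠ 0 := by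
    exact_mod_cast (show ((1 + μ:ℝ):ℂ) ≠ 0 by exact_mod_cast ne_of_gt hμ1)
  field_simp
  ring

theorem scalar2 (m M ν q : ℝ) (hν1 : 0 < 1 + ν) (hqdef : q = m + (M - m) * (1 / (1 + ν)))
    (hq : 0 < q) (a b : ℂ) :
    b - ((q⁻¹ : ℝ) : ℂ) * a
      = ((q⁻¹ * (1 / (1 + ν)) : ℝ) : ℂ) * (((M:ℝ) * b - a) - (ν:ℝ) * (a - (m:ℝ) * b)) := by
  have h1 : ((1:ℂ) + (ν:ℂ)) ≠ 0 := by
    exact_mod_cast (show ((1 + ν:ℝ):ℂ) ≠ 0 by exact_mod_cast ne_of_gt hν1)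
  have h2 : ((q:ℝ):ℂ) ≠ 0 := by exact_mod_cast ne_of_gt hq
  have h3 : ((q:ℝ):ℂ) * ((1:ℂ) + (ν:ℂ)) = (m:ℂ) * ((1:ℂ) + (ν:ℂ)) + ((M:ℂ) - (m:ℂ)) := by
    have : (q : ℝ) * (1 + ν) = m * (1 + ν) + (M - m) := by
      rw [hqdef]; field_simp
    exact_mod_cast this
  push_cast
  field_simp
  linear_combination b * h3


set_option maxHeartbeats 1000000 in
theorem stmt14 {D : ℕ}
    (φ φs : Matrix (Fin D) (Fin D) ℂ →ₗ[ℂ] Matrix (Fin D) (Fin D) ℂ)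
    (hadj : ∀ A B : Matrix (Fin D) (Fin D) ℂ, (Aᴴ * φ B).trace = ((φs A)ᴴ * B).trace)
    (hpos : ∀ M : Matrix (Fin D) (Fin D) ℂ, M.PosSemidef → (φ M).PosSemidef)
    (hker : ∀ M : Matrix (Fin D) (Fin D) ℂ, M.PosSemidef → φ M = 0 → M = 0)
    (hkers : ∀ M : Matrix (Fin D) (Fin D) ℂ, M.PosSemidef → φs M = 0 → M = 0) :
    ∀ X Y : Matrix (Fin D) (Fin D) ℂ, X.PosSemidef → X.trace = 1 →
      Y.PosSemidef → Y.trace = 1 →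
      dfun (projAct φ X) (projAct φ Y) ≤ contr φ * dfun X Y := by
  intro X Y hX htX hY htY
  have hX0 : X ≠ 0 := fun h => by simp [h] at htX
  have hY0 : Y ≠ 0 := fun h => by simp [h] at htY
  have hφX0 : φ X ≠ 0 := fun h => hX0 (hker X hX h)
  have hφY0 : φ Y ≠ 0 := fun h => hY0 (hker Y hY h)
  rw [dfun_projAct hpos hker hX hX0 hY hY0]
  have hc0 : 0 ≤ contr φ := contr_nonneg hpos hker hX htX
  obtain ⟨m, hmdef⟩ : ∃ x : ℝ, x = mfun X Y := ⟨_, rfl⟩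
  obtain ⟨m', hm'def⟩ : ∃ x : ℝ, x = mfun Y X := ⟨_, rfl⟩
  have hm0 : 0 ≤ m := hmdef ▸ mfun_nonneg hX hY hY0
  have hm'0 : 0 ≤ m' := hm'def ▸ mfun_nonneg hY hX hX0
  by_cases hmm : m * m' = 0
  · have hd : dfun X Y = 1 := by rw [dfun, ← hmdef, ← hm'def, hmm]; norm_num
    rw [hd, mul_one]
    exact dfun_le_contr hpos hker hX hX0 hY hY0
  by_cases hXY : X = Y
  · subst hXY
    rw [dfun_self (hpos X hX) hφX0, dfun_self hX hX0, mul_zero]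
  -- main case
  have hm : 0 < m := lt_of_le_of_ne hm0 (fun h => hmm (by rw [← h, zero_mul]))
  have hm' : 0 < m' := lt_of_le_of_ne hm'0 (fun h => hmm (by rw [← h, mul_zero]))
  have hm1 : m < 1 := hmdef ▸ mfun_lt_one hX htX hY htY hXY
  have hm'1 : m' < 1 := hm'def ▸ mfun_lt_one hY htY hX htX (Ne.symm hXY)
  obtain ⟨M, hMdef⟩ : ∃ x : ℝ, x = m'⁻¹ := ⟨_, rfl⟩
  have hMm' : m' * M = 1 := by rw [hMdef]; exact mul_inv_cancel₀ (ne_of_gt hm')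
  have hM1 : 1 < M := by nlinarith
  have hMm : 0 < M - m := by linarith
  -- the PSD gaps
  have hu : (X - m • Y).PosSemidef := by rw [hmdef]; exact mfun_psd hX hY hY0
  have hu0 : X - m • Y ≠ 0 := by
    intro h
    have htr : (X - m • Y).trace = ((1 - m : ℝ) : ℂ) := by
      rw [trace_sub, trace_smul, htX, htY]
      push_cast
      simp [Complex.real_smul]
    rw [h, trace_zero] at htr
    have : (1 - m : ℝ) = 0 := by exact_mod_cast htr.symm
    linarith
  have hw : (Y - m' • X).PosSemidef := by rw [hm'def]; exact mfun_psd hY hX hX0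
  have hw0 : Y - m' • X ≠ 0 := by
    intro h
    have htr : (Y - m' • X).trace = ((1 - m' : ℝ) : ℂ) := by
      rw [trace_sub, trace_smul, htX, htY]
      push_cast
      simp [Complex.real_smul]
    rw [h, trace_zero] at htr
    have : (1 - m' : ℝ) = 0 := by exact_mod_cast htr.symm
    linarith
  have hvw : M • Y - X = M • (Y - m' • X) := by
    rw [smul_sub, smul_smul, mul_comm M m', hMm', one_smul]
  have hv : (M • Y - X).PosSemidef := by rw [hvw]; exact psd_smul_real hw (by linarith)
  have hv0 : M • Y - X ≠ 0 := by
    rw [hvw]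
    intro h
    rcases smul_eq_zero.mp h with h' | h'
    · exact absurd h' (by positivity)
    · exact hw0 h'
  have hU : (φ (X - m • Y)).PosSemidef := hpos _ hu
  have hV : (φ (M • Y - X)).PosSemidef := hpos _ hv
  have hU0 : φ (X - m • Y) ≠ 0 := fun h => hu0 (hker _ hu h)
  have hV0 : φ (M • Y - X) ≠ 0 := fun h => hv0 (hker _ hv h)
  obtain ⟨μ, hμdef⟩ : ∃ x : ℝ, x = mfun (φ (X - m • Y)) (φ (M • Y - X)) := ⟨_, rfl⟩
  obtain ⟨ν, hνdef⟩ : ∃ x : ℝ, x = mfun (φ (M • Y - X)) (φ (X - m • Y)) := ⟨_, rfl⟩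
  have hμ0 : 0 ≤ μ := hμdef ▸ mfun_nonneg hU hV hV0
  have hν0 : 0 ≤ ν := hνdef ▸ mfun_nonneg hV hU hU0
  have hUμ : (φ (X - m • Y) - μ • φ (M • Y - X)).PosSemidef := by
    rw [hμdef]; exact mfun_psd hU hV hV0
  have hVν : (φ (M • Y - X) - ν • φ (X - m • Y)).PosSemidef := by
    rw [hνdef]; exact mfun_psd hV hU hU0
  have hUeq : φ (X - m • Y) = φ X - m • φ Y := by
    rw [map_sub, LinearMap.map_smul_of_tower]
  have hVeq : φ (M • Y - X) = M • φ Y - φ X := by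
    rw [map_sub, LinearMap.map_smul_of_tower]
  have hμ1 : (0:ℝ) < 1 + μ := by linarith
  have hν1 : (0:ℝ) < 1 + ν := by linarith
  obtain ⟨p, hpdef⟩ : ∃ x : ℝ, x = m + (M - m) * (μ / (1 + μ)) := ⟨_, rfl⟩
  obtain ⟨q, hqdef⟩ : ∃ x : ℝ, x = m + (M - m) * (1 / (1 + ν)) := ⟨_, rfl⟩
  have hp : 0 < p := by
    rw [hpdef]
    have : 0 ≤ (M - m) * (μ / (1 + μ)) := by positivity
    linarith
  have hq : 0 < q := by
    rw [hqdef]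
    have : 0 ≤ (M - m) * (1 / (1 + ν)) := by positivity
    linarith
  have claim1 : (φ X - p • φ Y).PosSemidef := by
    have heq : φ X - p • φ Y = (1 / (1 + μ)) • (φ (X - m • Y) - μ • φ (M • Y - X)) := by
      rw [hUeq, hVeq, hpdef]
      ext i j
      simp only [Matrix.sub_apply, Matrix.smul_apply, Complex.real_smul]
      exact scalar1 m M μ hμ1 (φ X i j) (φ Y i j)
    rw [heq]
    exact psd_smul_real hUμ (by positivity)
  have claim2 : (φ Y - q⁻¹ • φ X).PosSemidef := by
    have heq : φ Y - q⁻¹ • φ X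
        = (q⁻¹ * (1 / (1 + ν))) • (φ (M • Y - X) - ν • φ (X - m • Y)) := by
      rw [hUeq, hVeq]
      ext i j
      simp only [Matrix.sub_apply, Matrix.smul_apply, Complex.real_smul]
      exact scalar2 m M ν q hν1 hqdef hq (φ X i j) (φ Y i j)
    rw [heq]
    refine psd_smul_real hVν ?_
    positivity
  have hmφ1 : p ≤ mfun (φ X) (φ Y) := mfun_le (hpos X hX) (hpos Y hY) hφY0 claim1
  have hmφ2 : q⁻¹ ≤ mfun (φ Y) (φ X) := mfun_le (hpos Y hY) (hpos X hX) hφX0 claim2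
  have hmφ1' : 0 ≤ mfun (φ X) (φ Y) := le_trans (le_of_lt hp) hmφ1
  have ht1 : p / q ≤ mfun (φ X) (φ Y) * mfun (φ Y) (φ X) := by
    rw [div_eq_mul_inv]
    exact mul_le_mul hmφ1 hmφ2 (by positivity) hmφ1'
  have hpq0 : 0 ≤ p / q := by positivity
  have step1 : dfun (φ X) (φ Y) ≤ (1 - p/q) / (1 + p/q) := by
    rw [dfun]
    exact frac_antitone hpq0 ht1
  have step2 : (1 - p/q) / (1 + p/q) = (q - p) / (q + p) := by
    rw [div_eq_div_iff (by positivity) (by linarith)]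
    field_simp
  have step3 : dfun X Y = (M - m) / (M + m) := by
    rw [dfun, ← hmdef, ← hm'def]
    rw [div_eq_div_iff (by nlinarith) (by linarith)]
    nlinarith [hMm']
  -- the contraction bound from contr φ
  have hcUV : (1 - μ * ν) / (1 + μ * ν) ≤ contr φ := by
    have h := dfun_le_contr hpos hker hu hu0 hv hv0
    rwa [dfun, ← hμdef, ← hνdef] at h
  have ht0 : (0:ℝ) < 1 + μ * ν := by positivity
  have hcUV' : 1 - μ * ν ≤ contr φ * (1 + μ * ν) := by
    rw [div_le_iff₀ ht0] at hcUV
    exact hcUV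
  -- algebraic identities
  have haux1 : (q - p) * ((1 + μ) * (1 + ν)) = (M - m) * (1 - μ * ν) := by
    rw [hpdef, hqdef]
    field_simp [ne_of_gt hμ1, ne_of_gt hν1]
    ring
  have haux2 : (q + p) * ((1 + μ) * (1 + ν)) = (1 + μ * ν) * (M + m) + 2*m*ν + 2*M*μ := by
    rw [hpdef, hqdef]
    field_simp [ne_of_gt hμ1, ne_of_gt hν1]
    ring
  have key : (1 - μ * ν) * (M + m) ≤ contr φ * ((1 + μ * ν) * (M + m) + 2*m*ν + 2*M*μ) := by
    have h1 := mul_le_mul_of_nonneg_right hcUV' (show (0:ℝ) ≤ M + m by linarith)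
    have h2 : 0 ≤ contr φ * (2*m*ν + 2*M*μ) := by positivity
    nlinarith
  have hP : (0:ℝ) < (1 + μ) * (1 + ν) := by positivity
  have final : (q - p) / (q + p) ≤ contr φ * ((M - m) / (M + m)) := by
    rw [mul_div_assoc']
    rw [div_le_div_iff₀ (by linarith) (by linarith)]
    rw [← mul_le_mul_iff_of_pos_right hP]
    calc (q - p) * (M + m) * ((1 + μ) * (1 + ν))
        = ((q - p) * ((1 + μ) * (1 + ν))) * (M + m) := by ring
      _ = (M - m) * ((1 - μ * ν) * (M + m)) := by rw [haux1]; ring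
      _ ≤ (M - m) * (contr φ * ((1 + μ * ν) * (M + m) + 2*m*ν + 2*M*μ)) :=
          mul_le_mul_of_nonneg_left key (le_of_lt hMm)
      _ = (contr φ * (M - m)) * ((q + p) * ((1 + μ) * (1 + ν))) := by rw [haux2]; ring
      _ = contr φ * (M - m) * (q + p) * ((1 + μ) * (1 + ν)) := by ring
  calc dfun (φ X) (φ Y) ≤ (1 - p/q) / (1 + p/q) := step1
    _ = (q - p) / (q + p) := step2
    _ ≤ contr φ * ((M - m) / (M + m)) := final
    _ = contr φ * dfun X Y := by rw [step3]
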